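/- For every n ≥ 1, the function F_n(λ) = (1 / B((n+1)/2, 1/2)) · ( λⁿ · B_{1−λ²/4}((n+1)/2, 1/2) + 2ⁿ · B_{λ²/4}((n+1)/2, (n+1)/2) ) is differentiable at every λ ∈ (0, 2), with derivative F_n′(λ) = n λ^{n−1} · I_{1−λ²/4}((n+1)/2, 1/2). -/

import Mathlib

open MeasureTheory Metric Filter Topology Real

/-- The incomplete Beta function `B_x(a, b) = ∫₀ˣ t^(a-1) (1-t)^(b-1) dt`. -/
noncomputable def incBeta (x a b : ℝ) : ℝ :=
  ∫ t in (0 : ℝ)..x, t ^ (a - 1) * (1 - t) ^ (b - 1)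

/-- The (complete) Beta function `B(a, b) = Γ(a)Γ(b)/Γ(a+b)`. -/
noncomputable def betaFn (a b : ℝ) : ℝ :=
  Real.Gamma a * Real.Gamma b / Real.Gamma (a + b)

/-- The regularized incomplete Beta function `I_x(a, b) = B_x(a,b)/B(a,b)`. -/
noncomputable def regIncBeta (x a b : ℝ) : ℝ :=
  incBeta x a b / betaFn a b

lemma incBeta_hasDerivAt {a b x : ℝ} (ha : 1 ≤ a) (hx : x ∈ Set.Ioo (0 : ℝ) 1) :
    HasDerivAt (fun y => incBeta y a b) (x ^ (a - 1) * (1 - x) ^ (b - 1)) x := by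
  have hcont : ContinuousOn (fun t : ℝ => t ^ (a - 1) * (1 - t) ^ (b - 1)) (Set.Iio 1) := by
    intro t ht
    apply ContinuousWithinAt.mul
    · exact (Real.continuousAt_rpow_const t _ (Or.inr (by linarith))).continuousWithinAt
    · have h1 : (1 : ℝ) - t ≠ 0 := by
        have := Set.mem_Iio.mp ht; intro h; linarith [sub_eq_zero.mp h]
      exact ((Real.continuousAt_rpow_const (1 - t) _ (Or.inl h1)).comp
        ((continuous_const.sub continuous_id).continuousAt)).continuousWithinAt
  have hmem : Set.uIcc 0 x ⊆ Set.Iio 1 := by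
    rw [Set.uIcc_of_le hx.1.le]
    exact fun t ht => lt_of_le_of_lt ht.2 hx.2
  have hint : IntervalIntegrable (fun t : ℝ => t ^ (a - 1) * (1 - t) ^ (b - 1)) volume 0 x :=
    (hcont.mono hmem).intervalIntegrable
  exact intervalIntegral.integral_hasDerivAt_right hint
    (hcont.stronglyMeasurableAtFilter isOpen_Iio x hx.2)
    (hcont.continuousAt (isOpen_Iio.mem_nhds hx.2))

theorem deriv_of_pair_cdf
    {n : ℕ} (hn : 1 ≤ n) (lam : ℝ) (hlam : lam ∈ Set.Ioo (0 : ℝ) 2) :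
    HasDerivAt
      (fun l : ℝ => 1 / betaFn (((n : ℝ) + 1) / 2) (1 / 2) *
        (l ^ n * incBeta (1 - l ^ 2 / 4) (((n : ℝ) + 1) / 2) (1 / 2) +
          2 ^ n * incBeta (l ^ 2 / 4) (((n : ℝ) + 1) / 2) (((n : ℝ) + 1) / 2)))
      ((n : ℝ) * lam ^ (n - 1) *
        regIncBeta (1 - lam ^ 2 / 4) (((n : ℝ) + 1) / 2) (1 / 2))
      lam := by
  obtain ⟨m, rfl⟩ : ∃ m, n = m + 1 := ⟨n - 1, (Nat.succ_pred_eq_of_pos hn).symm⟩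
  obtain ⟨hlam0, hlam2⟩ := hlam
  set A : ℝ := ((↑(m + 1) : ℝ) + 1) / 2 with hA
  have haA : (1 : ℝ) ≤ A := by
    rw [hA]; push_cast; linarith [Nat.cast_nonneg (α := ℝ) m]
  have hx2 : lam ^ 2 / 4 ∈ Set.Ioo (0 : ℝ) 1 := ⟨by positivity, by nlinarith⟩
  have hx1 : 1 - lam ^ 2 / 4 ∈ Set.Ioo (0 : ℝ) 1 :=
    ⟨by nlinarith, by nlinarith⟩
  -- derivative of l ↦ 1 - l^2/4
  have h1 : HasDerivAt (fun l : ℝ => 1 - l ^ 2 / 4) (-(lam / 2)) lam := by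
    have := ((hasDerivAt_pow 2 lam).div_const 4).const_sub 1
    exact this.congr_deriv (by push_cast; ring)
  have h5 : HasDerivAt (fun l : ℝ => l ^ 2 / 4) (lam / 2) lam := by
    have := (hasDerivAt_pow 2 lam).div_const 4
    exact this.congr_deriv (by push_cast; ring)
  have hB1 := (incBeta_hasDerivAt (b := 1 / 2) haA hx1).comp lam h1
  have hB2 := (incBeta_hasDerivAt (b := A) haA hx2).comp lam h5
  have hP := (hasDerivAt_pow (m + 1) lam).mul hB1
  have hC := hB2.const_mul ((2 : ℝ) ^ (m + 1))
  have hsum := (hP.add hC).const_mul (1 / betaFn A (1 / 2))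
  have hs : (0 : ℝ) < lam / 2 := by linarith
  -- rpow simplifications at the point lam^2/4
  have e1 : lam ^ 2 / 4 = (lam / 2) ^ (2 : ℕ) := by ring
  have hx2a : (lam ^ 2 / 4) ^ (A - 1) = (lam / 2) ^ m := by
    rw [e1, ← Real.rpow_natCast (lam / 2) 2, ← Real.rpow_mul hs.le,
      show ((2 : ℕ) : ℝ) * (A - 1) = ((m : ℕ) : ℝ) by rw [hA]; push_cast; ring,
      Real.rpow_natCast]
  have hx2b : (lam ^ 2 / 4) ^ ((1 : ℝ) / 2 - 1) = 2 / lam := by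
    rw [e1, ← Real.rpow_natCast (lam / 2) 2, ← Real.rpow_mul hs.le,
      show ((2 : ℕ) : ℝ) * ((1 : ℝ) / 2 - 1) = (-1 : ℝ) by ring,
      Real.rpow_neg_one]
    rw [inv_div]
  have hfl : 1 - (1 - lam ^ 2 / 4) = lam ^ 2 / 4 := by ring
  refine hsum.congr_deriv ?_
  rw [regIncBeta, hfl, hx2a, hx2b]
  have h2nd : lam ^ (m + 1) *
      ((1 - lam ^ 2 / 4) ^ (A - 1) * (2 / lam) * -(lam / 2)) =
      -(lam ^ (m + 1) * (1 - lam ^ 2 / 4) ^ (A - 1)) := by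
    field_simp
  have h3rd : (2 : ℝ) ^ (m + 1) *
      ((lam / 2) ^ m * (1 - lam ^ 2 / 4) ^ (A - 1) * (lam / 2)) =
      lam ^ (m + 1) * (1 - lam ^ 2 / 4) ^ (A - 1) := by
    rw [show (lam / 2) ^ m * (1 - lam ^ 2 / 4) ^ (A - 1) * (lam / 2) =
      (lam / 2) ^ (m + 1) * (1 - lam ^ 2 / 4) ^ (A - 1) by rw [pow_succ]; ring,
      ← mul_assoc, ← mul_pow, show (2 : ℝ) * (lam / 2) = lam by ring]
  rw [h2nd, h3rd]
  simp only [Nat.add_sub_cancel, Function.comp_apply]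
  ring
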